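/- Let (M, μ) be a σ-finite measure space, n ≥ 1, and let H ⊆ ℝⁿ be a polarizer. For every measurable function u : M × ℝⁿ → [0, ∞), the polarization u^H is measurable and equimeasurable with u: for every t ≥ 0, (μ ⊗ vol)({(x, y) : u^H(x, y) > t}) = (μ ⊗ vol)({(x, y) : u(x, y) > t}). Consequently, for every 1 ≤ s < ∞, ∫ (u^H)^s d(μ ⊗ vol) = ∫ u^s d(μ ⊗ vol). -/

import Mathlib

open MeasureTheory Metric Set
open scoped RealInnerProductSpace ENNReal

noncomputable section

/-- Reflection of `ℝⁿ` across the hyperplane `{y : ⟨y, e⟩ = c}`. -/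
def reflectHyp {n : ℕ} (e : EuclideanSpace ℝ (Fin n)) (c : ℝ)
    (y : EuclideanSpace ℝ (Fin n)) : EuclideanSpace ℝ (Fin n) :=
  y - (2 * (⟪y, e⟫ - c)) • e

/-- Polarization of `u : M × ℝⁿ → ℝ` with respect to the polarizer
`H = {y : ⟨y, e⟩ > c}`. -/
def polarize {M : Type*} {n : ℕ} (e : EuclideanSpace ℝ (Fin n)) (c : ℝ)
    (u : M × EuclideanSpace ℝ (Fin n) → ℝ)
    (z : M × EuclideanSpace ℝ (Fin n)) : ℝ :=
  if c < ⟪z.2, e⟫ then max (u z) (u (z.1, reflectHyp e c z.2))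
  else min (u z) (u (z.1, reflectHyp e c z.2))

namespace PolarizeAux

variable {n : ℕ} {e : EuclideanSpace ℝ (Fin n)} {c : ℝ}

lemma inner_self_one (he : ‖e‖ = 1) : ⟪e, e⟫ = (1 : ℝ) := by
  rw [real_inner_self_eq_norm_mul_norm, he, mul_one]

lemma inner_reflectHyp (he : ‖e‖ = 1) (y : EuclideanSpace ℝ (Fin n)) :
    ⟪reflectHyp e c y, e⟫ = 2 * c - ⟪y, e⟫ := by
  simp only [reflectHyp, inner_sub_left, real_inner_smul_left, inner_self_one he]
  ring

lemma reflectHyp_invol (he : ‖e‖ = 1) (y : EuclideanSpace ℝ (Fin n)) :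
    reflectHyp e c (reflectHyp e c y) = y := by
  have h := inner_reflectHyp (c := c) he y
  simp only [reflectHyp] at h ⊢
  rw [h]
  module

/-- The linear reflection `y ↦ y - 2⟪y,e⟫ e` as a linear isometry equivalence. -/
def reflIso (he : ‖e‖ = 1) :
    EuclideanSpace ℝ (Fin n) ≃ₗᵢ[ℝ] EuclideanSpace ℝ (Fin n) where
  toFun y := y - (2 * ⟪y, e⟫) • e
  invFun y := y - (2 * ⟪y, e⟫) • e
  map_add' a b := by
    simp only [inner_add_left]
    module
  map_smul' r a := by
    simp only [real_inner_smul_left, RingHom.id_apply]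
    module
  left_inv y := by
    simp only [inner_sub_left, real_inner_smul_left, inner_self_one he]
    module
  right_inv y := by
    simp only [inner_sub_left, real_inner_smul_left, inner_self_one he]
    module
  norm_map' y := by
    have h2 : ‖y - (2 * ⟪y, e⟫) • e‖ ^ 2 = ‖y‖ ^ 2 := by
      rw [norm_sub_sq_real, real_inner_smul_right, norm_smul, he, mul_one,
        Real.norm_eq_abs]
      rw [sq_abs]
      ring
    have h3 := sq_eq_sq_iff_abs_eq_abs (‖y - (2 * ⟪y, e⟫) • e‖) ‖y‖
    rw [abs_of_nonneg (norm_nonneg _), abs_of_nonneg (norm_nonneg _)] at h3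
    exact h3.mp h2

lemma measurePreserving_reflectHyp (he : ‖e‖ = 1) :
    MeasurePreserving (reflectHyp e c)
      (volume : Measure (EuclideanSpace ℝ (Fin n))) volume := by
  have key : reflectHyp e c = (fun y => y + (2 * c) • e) ∘ (reflIso (n := n) (e := e) he) := by
    funext y
    show reflectHyp e c y = (y - (2 * ⟪y, e⟫) • e) + (2 * c) • e
    simp only [reflectHyp]
    rw [mul_sub, sub_smul]
    abel
  rw [key]
  exact (measurePreserving_add_right volume ((2 * c) • e)).comp
    (reflIso (n := n) (e := e) he).measurePreserving

lemma volume_hyperplane (he : ‖e‖ = 1) :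
    (volume : Measure (EuclideanSpace ℝ (Fin n))) {y | ⟪y, e⟫ = c} = 0 := by
  set K : Submodule ℝ (EuclideanSpace ℝ (Fin n)) := LinearMap.ker (innerSL ℝ e : EuclideanSpace ℝ (Fin n) →ₗ[ℝ] ℝ) with hKdef
  have hK : K ≠ ⊤ := by
    intro h
    have he' : e ∈ K := by rw [h]; trivial
    have h0 : ⟪e, e⟫ = (0 : ℝ) := he'
    rw [inner_self_one he] at h0
    norm_num at h0
  have h0 : volume (K : Set (EuclideanSpace ℝ (Fin n))) = 0 :=
    MeasureTheory.Measure.addHaar_submodule volume K hK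
  have hset : {y : EuclideanSpace ℝ (Fin n) | ⟪y, e⟫ = c} =
      (fun y => y + (-(c • e))) ⁻¹' (K : Set (EuclideanSpace ℝ (Fin n))) := by
    ext y
    simp only [mem_setOf_eq, mem_preimage, SetLike.mem_coe, hKdef, LinearMap.mem_ker,
      ContinuousLinearMap.coe_coe, innerSL_apply_apply, inner_add_right, inner_neg_right,
      real_inner_smul_right, inner_self_one he, mul_one]
    rw [real_inner_comm]
    constructor <;> intro h <;> linarith
  rw [hset, measure_preimage_add_right, h0]

end PolarizeAux

open PolarizeAux

/-- the polarization of a nonnegative measurable function is measurable and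
equimeasurable with the original function, hence has the same `L^s`-integrals. -/
theorem stmt_0 {M : Type*} [MeasurableSpace M] (μ : Measure M) [SigmaFinite μ]
    {n : ℕ} (hn : 1 ≤ n)
    (e : EuclideanSpace ℝ (Fin n)) (he : ‖e‖ = 1) (c : ℝ)
    (u : M × EuclideanSpace ℝ (Fin n) → ℝ)
    (hmeas : Measurable u) (hpos : ∀ z, 0 ≤ u z) :
    Measurable (polarize e c u) ∧
    (∀ t : ℝ, 0 ≤ t →
      (μ.prod volume) {z | t < polarize e c u z} = (μ.prod volume) {z | t < u z}) ∧
    (∀ s : ℝ, 1 ≤ s →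
      ∫⁻ z, ENNReal.ofReal (polarize e c u z ^ s) ∂(μ.prod volume) =
        ∫⁻ z, ENNReal.ofReal (u z ^ s) ∂(μ.prod volume)) := by
  set ν : Measure (M × EuclideanSpace ℝ (Fin n)) := μ.prod volume with hν
  set T : M × EuclideanSpace ℝ (Fin n) → M × EuclideanSpace ℝ (Fin n) := fun z => (z.1, reflectHyp e c z.2) with hT
  set g : M × EuclideanSpace ℝ (Fin n) → ℝ := fun z => u (T z) with hg
  -- continuity / measurability facts
  have hσcont : Continuous (reflectHyp e c) := by
    unfold reflectHyp
    fun_prop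
  have hTmeas : Measurable T :=
    measurable_fst.prodMk (hσcont.measurable.comp measurable_snd)
  have hgmeas : Measurable g := hmeas.comp hTmeas
  have hιmeas : Measurable fun z : M × EuclideanSpace ℝ (Fin n) => ⟪z.2, e⟫ :=
    ((continuous_id.inner continuous_const).measurable).comp measurable_snd
  have hPmeas : MeasurableSet {z : M × EuclideanSpace ℝ (Fin n) | c < ⟪z.2, e⟫} :=
    measurableSet_lt measurable_const hιmeas
  have hpolmeas : Measurable (polarize e c u) := by
    have hrfl : polarize e c u = fun z : M × EuclideanSpace ℝ (Fin n) =>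
        if c < ⟪z.2, e⟫ then max (u z) (g z) else min (u z) (g z) := rfl
    rw [hrfl]
    exact Measurable.ite hPmeas (hmeas.max hgmeas) (hmeas.min hgmeas)
  -- measure-preserving T
  have hσ : MeasurePreserving (reflectHyp e c) (volume : Measure (EuclideanSpace ℝ (Fin n))) volume :=
    measurePreserving_reflectHyp he
  have hTpres : MeasurePreserving T ν ν := (MeasurePreserving.id μ).prod hσ
  have hTT : ∀ z : M × EuclideanSpace ℝ (Fin n), T (T z) = z := by
    intro z
    simp only [hT]
    rw [reflectHyp_invol he]
  have hgT : ∀ z : M × EuclideanSpace ℝ (Fin n), g (T z) = u z := by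
    intro z
    show u (T (T z)) = u z
    rw [hTT]
  -- boundary is null
  have hB : ν {z : M × EuclideanSpace ℝ (Fin n) | ⟪z.2, e⟫ = c} = 0 := by
    have hprod : {z : M × EuclideanSpace ℝ (Fin n) | ⟪z.2, e⟫ = c} = (univ : Set M) ×ˢ {y : EuclideanSpace ℝ (Fin n) | ⟪y, e⟫ = c} := by
      ext z; simp [Set.mem_prod]
    rw [hprod, hν, Measure.prod_prod, volume_hyperplane he, mul_zero]
  -- key equimeasurability, for all t
  have key : ∀ t : ℝ, ν {z | t < polarize e c u z} = ν {z | t < u z} := by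
    intro t
    set A1 : Set (M × EuclideanSpace ℝ (Fin n)) :=
      {z | c < ⟪z.2, e⟫} ∩ {z | t < u z} with hA1
    set A2 : Set (M × EuclideanSpace ℝ (Fin n)) :=
      {z | c < ⟪z.2, e⟫} ∩ ({z | u z ≤ t} ∩ {z | t < g z}) with hA2
    set A3 : Set (M × EuclideanSpace ℝ (Fin n)) :=
      {z | c < ⟪z.2, e⟫}ᶜ ∩ ({z | t < u z} ∩ {z | t < g z}) with hA3
    set A4 : Set (M × EuclideanSpace ℝ (Fin n)) :=
      {z | c < ⟪z.2, e⟫}ᶜ ∩ ({z | t < u z} ∩ {z | g z ≤ t}) with hA4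
    set A4' : Set (M × EuclideanSpace ℝ (Fin n)) :=
      {z | ⟪z.2, e⟫ < c} ∩ ({z | t < u z} ∩ {z | g z ≤ t}) with hA4'
    have hu_t : MeasurableSet {z : M × EuclideanSpace ℝ (Fin n) | t < u z} :=
      measurableSet_lt measurable_const hmeas
    have hu_t' : MeasurableSet {z : M × EuclideanSpace ℝ (Fin n) | u z ≤ t} :=
      measurableSet_le hmeas measurable_const
    have hg_t : MeasurableSet {z : M × EuclideanSpace ℝ (Fin n) | t < g z} :=
      measurableSet_lt measurable_const hgmeas
    have hg_t' : MeasurableSet {z : M × EuclideanSpace ℝ (Fin n) | g z ≤ t} :=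
      measurableSet_le hgmeas measurable_const
    have hmA1 : MeasurableSet A1 := hPmeas.inter hu_t
    have hmA2 : MeasurableSet A2 := hPmeas.inter (hu_t'.inter hg_t)
    have hmA3 : MeasurableSet A3 := hPmeas.compl.inter (hu_t.inter hg_t)
    have hmA4 : MeasurableSet A4 := hPmeas.compl.inter (hu_t.inter hg_t')
    have hset1 : {z : M × EuclideanSpace ℝ (Fin n) | t < polarize e c u z}
        = (A1 ∪ A2) ∪ A3 := by
      ext z
      have hP : polarize e c u z =
          if c < ⟪z.2, e⟫ then max (u z) (g z) else min (u z) (g z) := rfl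
      simp only [Set.mem_union, hA1, hA2, hA3, Set.mem_inter_iff, Set.mem_compl_iff,
        mem_setOf_eq, hP, lt_max_iff, lt_min_iff, lt_sup_iff, lt_inf_iff]
      by_cases h : c < ⟪z.2, e⟫
      · simp only [h, if_true, not_true, true_and, false_and, and_false, or_false]
        constructor
        · intro h1
          rcases lt_max_iff.mp h1 with h1 | h1
          · exact Or.inl h1
          · rcases lt_or_ge t (u z) with h2 | h2
            · exact Or.inl h2
            · exact Or.inr ⟨h2, h1⟩
        · rintro (h1 | ⟨-, h1⟩)
          · exact lt_max_iff.mpr (Or.inl h1)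
          · exact lt_max_iff.mpr (Or.inr h1)
      · simp only [h, if_false, not_false_iff, true_and, false_and, false_or]
        exact lt_min_iff
    have hset2 : {z : M × EuclideanSpace ℝ (Fin n) | t < u z} = (A1 ∪ A4) ∪ A3 := by
      ext z
      simp only [Set.mem_union, hA1, hA4, hA3, Set.mem_inter_iff, Set.mem_compl_iff,
        mem_setOf_eq]
      by_cases h : c < ⟪z.2, e⟫
      · simp only [h, not_true, true_and, false_and, or_false]
      · simp only [h, not_false_iff, true_and, false_and, false_or]
        constructor
        · intro hh
          rcases le_or_gt (g z) t with h1 | h1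
          · exact Or.inl ⟨hh, h1⟩
          · exact Or.inr ⟨hh, h1⟩
        · rintro (⟨hh, -⟩ | ⟨hh, -⟩) <;> exact hh
    have hd1 : Disjoint A1 A2 := by
      rw [Set.disjoint_left]
      rintro z ⟨-, h2⟩ ⟨-, h3, -⟩
      simp only [mem_setOf_eq] at h2 h3
      exact absurd h2 (not_lt.mpr h3)
    have hd1' : Disjoint A1 A4 := by
      rw [Set.disjoint_left]
      rintro z ⟨h1, -⟩ ⟨h2, -⟩
      simp only [mem_setOf_eq, Set.mem_compl_iff] at h1 h2
      exact h2 h1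
    have hd2 : Disjoint (A1 ∪ A2) A3 := by
      rw [Set.disjoint_left]
      rintro z (⟨h1, -⟩ | ⟨h1, -⟩) ⟨h2, -⟩ <;>
        simp only [mem_setOf_eq, Set.mem_compl_iff] at h1 h2 <;> exact h2 h1
    have hd2' : Disjoint (A1 ∪ A4) A3 := by
      rw [Set.disjoint_left]
      rintro z (⟨h1, -⟩ | ⟨-, -, h1⟩) ⟨h2, h3, h4⟩
      · simp only [mem_setOf_eq, Set.mem_compl_iff] at h1 h2
        exact h2 h1
      · simp only [mem_setOf_eq] at h1 h4
        exact absurd h4 (not_lt.mpr h1)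
    -- νA4 = νA2 via T
    have hpre : T ⁻¹' A2 = A4' := by
      ext z
      have h1 : ⟪(T z).2, e⟫ = 2 * c - ⟪z.2, e⟫ := inner_reflectHyp he z.2
      have h2 : u (T z) = g z := rfl
      have h3 : g (T z) = u z := hgT z
      simp only [Set.mem_preimage, hA2, hA4', Set.mem_inter_iff, mem_setOf_eq, h1, h2, h3]
      constructor
      · rintro ⟨ha, hb, hc⟩
        exact ⟨by linarith, hc, hb⟩
      · rintro ⟨ha, hb, hc⟩
        exact ⟨by linarith, hc, hb⟩
    have hA4A2 : ν A4 = ν A2 := by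
      have hxa : ν (T ⁻¹' A2) = ν A2 := hTpres.measure_preimage hmA2.nullMeasurableSet
      have hsub1 : A4' ⊆ A4 := by
        rintro z ⟨h1, h2⟩
        simp only [mem_setOf_eq] at h1
        exact ⟨by simp only [Set.mem_compl_iff, mem_setOf_eq]; exact not_lt.mpr h1.le, h2⟩
      have hsub2 : A4 ⊆ A4' ∪ {z : M × EuclideanSpace ℝ (Fin n) | ⟪z.2, e⟫ = c} := by
        rintro z ⟨h1, h2⟩
        simp only [Set.mem_compl_iff, mem_setOf_eq] at h1
        rcases lt_or_eq_of_le (not_lt.mp h1) with h | h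
        · exact Or.inl ⟨h, h2⟩
        · exact Or.inr h
      have hle1 : ν A4 ≤ ν A4' := by
        calc ν A4 ≤ ν (A4' ∪ {z : M × EuclideanSpace ℝ (Fin n) | ⟪z.2, e⟫ = c}) :=
              measure_mono hsub2
        _ ≤ ν A4' + ν {z : M × EuclideanSpace ℝ (Fin n) | ⟪z.2, e⟫ = c} :=
              measure_union_le _ _
        _ = ν A4' := by rw [hB, add_zero]
      have hle2 : ν A4' ≤ ν A4 := measure_mono hsub1
      rw [le_antisymm hle1 hle2, ← hpre, hxa]
    rw [hset1, hset2,
      measure_union hd2 hmA3, measure_union hd2' hmA3,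
      measure_union hd1 hmA2, measure_union hd1' hmA4, hA4A2]
  -- nonnegativity of the polarization
  have hpolnn : ∀ z, 0 ≤ polarize e c u z := by
    intro z
    have hP : polarize e c u z =
        if c < ⟪z.2, e⟫ then max (u z) (g z) else min (u z) (g z) := rfl
    rw [hP]
    split
    · exact le_max_of_le_left (hpos z)
    · exact le_min (hpos z) (hpos _)
  refine ⟨hpolmeas, fun t _ => key t, ?_⟩
  intro s hs
  have hs0 : (0 : ℝ) < s := lt_of_lt_of_le one_pos hs
  have hc1 : Continuous fun x : ℝ => x ^ s := Real.continuous_rpow_const hs0.le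
  have m1 : Measurable fun z : M × EuclideanSpace ℝ (Fin n) => polarize e c u z ^ s :=
    hc1.measurable.comp hpolmeas
  have m2 : Measurable fun z : M × EuclideanSpace ℝ (Fin n) => u z ^ s := hc1.measurable.comp hmeas
  rw [lintegral_eq_lintegral_meas_lt ν
      (Filter.Eventually.of_forall fun z => Real.rpow_nonneg (hpolnn z) s) m1.aemeasurable,
    lintegral_eq_lintegral_meas_lt ν
      (Filter.Eventually.of_forall fun z => Real.rpow_nonneg (hpos z) s) m2.aemeasurable]
  refine setLIntegral_congr_fun measurableSet_Ioi
    (fun t ht => ?_)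
  have ht0 : (0 : ℝ) < t := ht
  have e1 : {z : M × EuclideanSpace ℝ (Fin n) | t < polarize e c u z ^ s} =
      {z : M × EuclideanSpace ℝ (Fin n) | t ^ s⁻¹ < polarize e c u z} := by
    ext z
    exact (Real.rpow_inv_lt_iff_of_pos ht0.le (hpolnn z) hs0).symm
  have e2 : {z : M × EuclideanSpace ℝ (Fin n) | t < u z ^ s} = {z : M × EuclideanSpace ℝ (Fin n) | t ^ s⁻¹ < u z} := by
    ext z
    exact (Real.rpow_inv_lt_iff_of_pos ht0.le (hpos z) hs0).symm
  rw [e1, e2, key (t ^ s⁻¹)]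

end
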